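/- Fix ε ∈ (0,1) and a sequence (p_n) with 0 ≤ p_n ≤ 1, and let ψ : ℕ → [0,1/2]. For every interval J ⊆ [0,1] and every N ∈ ℕ: σ²[ ∑_{n=1}^N λ(E_n^Q ∩ J) ] ≤ 4 ∑_{n=1}^N p_n ψ(n)² / n, where σ² denotes variance over the random choice of P. -/

import Mathlib

open MeasureTheory ProbabilityTheory Filter Set

noncomputable section

/-- The approximation set `⋃_{a ∈ A} ((a-ψ(n))/n, (a+ψ(n))/n)`. -/
def approxSet (A : Set ℕ) (ψ : ℕ → ℝ) (n : ℕ) : Set ℝ :=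
  ⋃ a ∈ A, Set.Ioo (((a : ℝ) - ψ n) / n) (((a : ℝ) + ψ n) / n)

/-- The set of partially reduced numerators: `a ∈ {1,…,n}` with `gcd(a,n) ≤ (log n)^{ε/2}`. -/
def Sred (ε : ℝ) (n : ℕ) : Set ℕ :=
  {a | 1 ≤ a ∧ a ≤ n ∧ (Nat.gcd a n : ℝ) ≤ Real.log n ^ (ε / 2)}

/-- The random approximation set `E_n^Q`, with numerators in `Q_n = P_n ∩ S_n`. -/
def EQset (ε : ℝ) (P : ℕ → Set ℕ) (ψ : ℕ → ℝ) (n : ℕ) : Set ℝ :=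
  approxSet (P n ∩ Sred ε n) ψ n

/-- Variance of the partial sums of measures of approximation sets:
`σ²[∑_{n ≤ N} λ(E_n^Q ∩ J)] ≤ 4 ∑_{n ≤ N} pₙ ψ(n)²/n`. -/
theorem stmt15
    {Ω : Type*} [MeasurableSpace Ω] (μ : Measure Ω) [IsProbabilityMeasure μ]
    (ε : ℝ) (hε : ε ∈ Set.Ioo (0 : ℝ) 1)
    (p : ℕ → ℝ) (hp : ∀ n, p n ∈ Set.Icc (0 : ℝ) 1)
    (P : Ω → ℕ → Set ℕ)
    (hPsub : ∀ ω n, P ω n ⊆ Set.Icc 1 n)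
    (hPmeas : ∀ n a : ℕ, MeasurableSet {ω | a ∈ P ω n})
    (hPprob : ∀ n a : ℕ, 1 ≤ a → a ≤ n → μ {ω | a ∈ P ω n} = ENNReal.ofReal (p n))
    (hPindep : iIndepSet (fun q : ℕ × ℕ => {ω | q.2 ∈ P ω q.1}) μ)
    (ψ : ℕ → ℝ) (hψ : ∀ k, ψ k ∈ Set.Icc (0 : ℝ) (1 / 2))
    (J : Set ℝ) (hJ : J.OrdConnected) (hJ1 : J ⊆ Set.Icc (0 : ℝ) 1)
    (N : ℕ) :
    variance (fun ω => ∑ n ∈ Finset.Icc 1 N, (volume (EQset ε (P ω) ψ n ∩ J)).toReal) μ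
      ≤ 4 * ∑ n ∈ Finset.Icc 1 N, p n * ψ n ^ 2 / n := by
  classical
  have hJmeas : MeasurableSet J := hJ.measurableSet
  -- basic interval data
  set I : ℕ → ℕ → Set ℝ := fun n a =>
    Set.Ioo (((a : ℝ) - ψ n) / n) (((a : ℝ) + ψ n) / n) with hI
  set c : ℕ → ℕ → ℝ := fun n a => (volume (I n a ∩ J)).toReal with hcdef
  set c' : ℕ → ℕ → ℝ := fun n a => if a ∈ Sred ε n then c n a else 0 with hc'def
  set A : ℕ × ℕ → Set Ω := fun q => {ω | q.2 ∈ P ω q.1} with hAdef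
  set X : ℕ × ℕ → Ω → ℝ := fun q => (A q).indicator (fun _ => c' q.1 q.2) with hXdef
  have hAmeas : ∀ q : ℕ × ℕ, MeasurableSet (A q) := fun q => hPmeas q.1 q.2
  have hc_nonneg : ∀ n a, 0 ≤ c n a := fun n a => ENNReal.toReal_nonneg
  have hc'_nonneg : ∀ n a, 0 ≤ c' n a := by
    intro n a; simp only [hc'def]; split <;> simp [hc_nonneg]
  have hInotTop : ∀ n a, volume (I n a ∩ J) ≠ ⊤ := by
    intro n a
    exact ne_top_of_le_ne_top measure_Ioo_lt_top.ne (measure_mono inter_subset_left)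
  have hcle : ∀ n a : ℕ, c n a ≤ 2 * ψ n / n := by
    intro n a
    have hψn := (hψ n).1
    have h0 : (0:ℝ) ≤ 2 * ψ n / n := by positivity
    refine ENNReal.toReal_le_of_le_ofReal h0 ?_
    calc volume (I n a ∩ J) ≤ volume (I n a) := measure_mono inter_subset_left
      _ = ENNReal.ofReal (((a : ℝ) + ψ n) / n - ((a : ℝ) - ψ n) / n) := Real.volume_Ioo
      _ = ENNReal.ofReal (2 * ψ n / n) := by rw [div_sub_div_same]; ring_nf
  -- disjointness of intervals for distinct numerators
  have hdisj : ∀ n : ℕ, ∀ a b : ℕ, a ≠ b → Disjoint (I n a ∩ J) (I n b ∩ J) := by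
    intro n a b hab
    have key : ∀ a b : ℕ, a < b → Disjoint (I n a ∩ J) (I n b ∩ J) := by
      intro a b h
      have hn : (0:ℝ) ≤ (n:ℝ) := Nat.cast_nonneg n
      have hab1 : (a:ℝ) + 1 ≤ (b:ℝ) := by exact_mod_cast Nat.succ_le_of_lt h
      have hψ2 := (hψ n).2
      have h1 : ((a:ℝ) + ψ n) / n ≤ ((b:ℝ) - ψ n) / n := by
        rw [div_eq_mul_inv, div_eq_mul_inv]
        exact mul_le_mul_of_nonneg_right (by linarith) (inv_nonneg.2 hn)
      rw [Set.disjoint_left]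
      rintro x ⟨⟨_, hx2⟩, _⟩ ⟨⟨hx3, _⟩, _⟩
      exact absurd (lt_of_lt_of_le hx2 (h1.trans hx3.le)) (lt_irrefl x)
    rcases lt_or_gt_of_ne hab with h | h
    · exact key a b h
    · exact (key b a h).symm
  -- key identity: the measure is a sum of indicator variables
  have hEQ : ∀ (ω : Ω) (n : ℕ),
      (volume (EQset ε (P ω) ψ n ∩ J)).toReal = ∑ a ∈ Finset.Icc 1 n, X (n, a) ω := by
    intro ω n
    set F : Finset ℕ := (Finset.Icc 1 n).filter (fun a => a ∈ P ω n ∩ Sred ε n) with hF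
    have hset : EQset ε (P ω) ψ n ∩ J = ⋃ a ∈ F, (I n a ∩ J) := by
      ext x
      simp only [EQset, approxSet, Set.mem_inter_iff, Set.mem_iUnion, exists_prop, hF,
        Finset.mem_filter, Finset.mem_Icc, hI]
      constructor
      · rintro ⟨⟨a, ⟨haP, haS⟩, hx⟩, hxJ⟩
        exact ⟨a, ⟨⟨haS.1, haS.2.1⟩, haP, haS⟩, hx, hxJ⟩
      · rintro ⟨a, ⟨_, haP, haS⟩, hx, hxJ⟩
        exact ⟨⟨a, ⟨haP, haS⟩, hx⟩, hxJ⟩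
    have hvol : volume (⋃ a ∈ F, (I n a ∩ J)) = ∑ a ∈ F, volume (I n a ∩ J) := by
      refine measure_biUnion_finset ?_ (fun b _ => measurableSet_Ioo.inter hJmeas)
      intro a _ b _ hab
      exact hdisj n a b hab
    rw [hset, hvol, ENNReal.toReal_sum (fun a _ => hInotTop n a)]
    rw [Finset.sum_filter]
    refine Finset.sum_congr rfl (fun a _ => ?_)
    simp only [hXdef, hAdef, hc'def, Set.indicator_apply, Set.mem_setOf_eq, Set.mem_inter_iff]
    by_cases h1 : a ∈ P ω n <;> by_cases h2 : a ∈ Sred ε n <;> simp [h1, h2, hcdef]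
  -- rewrite the random variable as a sum of independent variables
  set s : Finset (ℕ × ℕ) := Finset.Icc 1 N ×ˢ Finset.Icc 1 N with hs
  have hfun : (fun ω => ∑ n ∈ Finset.Icc 1 N, (volume (EQset ε (P ω) ψ n ∩ J)).toReal)
      = ∑ q ∈ s, X q := by
    funext ω
    rw [Finset.sum_apply, hs, Finset.sum_product]
    refine Finset.sum_congr rfl (fun n hn => ?_)
    rw [hEQ ω n]
    refine Finset.sum_subset (Finset.Icc_subset_Icc_right (Finset.mem_Icc.1 hn).2) ?_
    intro a ha hna
    have hna' : a ∉ Sred ε n := by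
      intro hS
      exact hna (Finset.mem_Icc.2 ⟨hS.1, hS.2.1⟩)
    simp [hXdef, hc'def, Set.indicator_apply, hna']
  have hXmeas : ∀ q : ℕ × ℕ, Measurable (X q) :=
    fun q => measurable_const.indicator (hAmeas q)
  have hXmem : ∀ q : ℕ × ℕ, MemLp (X q) 2 μ :=
    fun q => memLp_indicator_const 2 (hAmeas q) _ (Or.inr (measure_ne_top μ _))
  -- independence
  have hind := hPindep.iIndepFun_indicator (β := ℝ) (m := inferInstance)
  have hpair : Set.Pairwise ↑s fun q r => IndepFun (X q) (X r) μ := by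
    intro q _ r _ hqr
    have h1 : IndepFun ((A q).indicator fun _ => (1:ℝ))
        ((A r).indicator fun _ => (1:ℝ)) μ := hind.indepFun hqr
    have h2 := h1.comp (φ := fun x : ℝ => c' q.1 q.2 * x) (ψ := fun x : ℝ => c' r.1 r.2 * x)
      (measurable_const_mul _) (measurable_const_mul _)
    have e : ∀ u : ℕ × ℕ, ((fun x : ℝ => c' u.1 u.2 * x) ∘
        ((A u).indicator fun _ => (1:ℝ))) = X u := by
      intro u
      funext ω
      simp only [Function.comp_apply, hXdef, Set.indicator_apply]
      split <;> simp
    rwa [e q, e r] at h2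
  rw [hfun, IndepFun.variance_sum (fun q _ => hXmem q) hpair]
  -- bound each variance
  have hvar : ∀ n ∈ Finset.Icc 1 N, ∀ a ∈ Finset.Icc 1 N,
      variance (X (n, a)) μ ≤ if a ∈ Finset.Icc 1 n then (2 * ψ n / n) ^ 2 * p n else 0 := by
    intro n hn a ha
    by_cases hin : a ∈ Finset.Icc 1 n
    · simp only [hin, if_true]
      obtain ⟨ha1, han⟩ := Finset.mem_Icc.1 hin
      have hμA : μ (A (n, a)) = ENNReal.ofReal (p n) := hPprob n a ha1 han
      calc variance (X (n, a)) μ ≤ μ[(X (n, a)) ^ 2] :=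
            variance_le_expectation_sq (hXmeas _).aestronglyMeasurable
        _ = ∫ ω, (A (n, a)).indicator (fun _ => (c' n a) ^ 2) ω ∂μ := by
            refine integral_congr_ae (Filter.Eventually.of_forall (fun ω => ?_))
            simp only [Pi.pow_apply, hXdef, Set.indicator_apply]
            split <;> simp
        _ = (μ (A (n, a))).toReal • (c' n a) ^ 2 := integral_indicator_const _ (hAmeas _)
        _ = p n * (c' n a) ^ 2 := by
            rw [hμA, ENNReal.toReal_ofReal (hp n).1, smul_eq_mul, mul_comm]
        _ ≤ (2 * ψ n / n) ^ 2 * p n := by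
            rw [mul_comm]
            refine mul_le_mul_of_nonneg_right ?_ (hp n).1
            have h1 : c' n a ≤ 2 * ψ n / n := by
              simp only [hc'def]
              split
              · exact hcle n a
              · have := (hψ n).1
                positivity
            exact pow_le_pow_left₀ (hc'_nonneg n a) h1 2
    · simp only [hin, if_false]
      have hna' : a ∉ Sred ε n := by
        intro hS
        exact hin (Finset.mem_Icc.2 ⟨hS.1, hS.2.1⟩)
      have : X (n, a) = 0 := by
        funext ω
        simp [hXdef, hc'def, Set.indicator_apply, hna']
      rw [this, variance_zero]
  calc ∑ q ∈ s, variance (X q) μ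
      ≤ ∑ n ∈ Finset.Icc 1 N, ∑ a ∈ Finset.Icc 1 N,
        (if a ∈ Finset.Icc 1 n then (2 * ψ n / n) ^ 2 * p n else 0) := by
        rw [hs, Finset.sum_product]
        exact Finset.sum_le_sum (fun n hn => Finset.sum_le_sum (fun a ha => hvar n hn a ha))
    _ = ∑ n ∈ Finset.Icc 1 N, (n : ℝ) * ((2 * ψ n / n) ^ 2 * p n) := by
        refine Finset.sum_congr rfl (fun n hn => ?_)
        rw [Finset.sum_ite_mem, Finset.inter_eq_right.2
          (Finset.Icc_subset_Icc_right (Finset.mem_Icc.1 hn).2), Finset.sum_const,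
          Nat.card_Icc, nsmul_eq_mul]
        simp
    _ ≤ 4 * ∑ n ∈ Finset.Icc 1 N, p n * ψ n ^ 2 / n := by
        rw [Finset.mul_sum]
        refine Finset.sum_le_sum (fun n hn => ?_)
        have hn1 : 1 ≤ n := (Finset.mem_Icc.1 hn).1
        have hn0 : (n : ℝ) ≠ 0 := Nat.cast_ne_zero.2 (by omega)
        have : (n:ℝ) * ((2 * ψ n / n) ^ 2 * p n) = 4 * (p n * ψ n ^ 2 / n) := by
          field_simp
          ring
        rw [this, mul_div_assoc]
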